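/- For α > -1 and c > 0, the functions Q̃_n^{(α,c)}(x) := (d^n/dx^n)[w_{α+n,c}(x)], where w_{v,c}(x) = x^{v/2} e^{-cx} I_v(2√x), satisfy the parameter-shift relation Q̃_n^{(α+1,c)}(x) = (1/c)·Q̃_n^{(α,c)}(x) − (1/c)·Q̃_{n+1}^{(α,c)}(x) for all x > 0. -/

import Mathlib

noncomputable def besselI (ν z : ℝ) : ℝ :=
  (z / 2) ^ ν * ∑' i : ℕ, (z ^ 2 / 4) ^ i / (Real.Gamma (i + 1) * Real.Gamma (ν + i + 1))

/-- The weight `w_{v,c}(x) = x^{v/2} e^{-c x} I_v(2√x)`. -/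
noncomputable def wBessel (v c x : ℝ) : ℝ :=
  x ^ (v / 2) * Real.exp (-c * x) * besselI v (2 * Real.sqrt x)
/-- `Q̃_n^{(α,c)}(x) = (d^n/dx^n) w_{α+n,c}(x)`. -/
noncomputable def Qt (n : ℕ) (α c x : ℝ) : ℝ :=
  iteratedDeriv n (fun y => wBessel (α + n) c y) x

open Real Filter Finset Metric

noncomputable def besselS (u y : ℝ) : ℝ :=
  ∑' i : ℕ, y ^ i / (Real.Gamma (i + 1) * Real.Gamma (u + i + 1))

noncomputable def besselF (u x : ℝ) : ℝ := x ^ u * besselS u x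

lemma summable_U (u R : ℝ) (hR : 0 < R) :
    Summable (fun i : ℕ =>
      (i : ℝ) * R ^ (i - 1) * |(Real.Gamma (i + 1) * Real.Gamma (u + i + 1))⁻¹|) := by
  obtain ⟨N, hN⟩ := exists_nat_ge (max (2 * R) (1 - u))
  apply summable_of_ratio_norm_eventually_le (r := 1 / 2) (by norm_num)
  filter_upwards [eventually_ge_atTop (N + 1)] with i hi
  obtain ⟨j, rfl⟩ : ∃ j, i = j + 1 := ⟨i - 1, by omega⟩
  have hiN : (N : ℝ) ≤ (j : ℝ) + 1 := by exact_mod_cast Nat.le_of_succ_le hi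
  have h2R : 2 * R ≤ (j : ℝ) + 1 := le_trans ((le_max_left _ _).trans hN) hiN
  have hu2 : (2 : ℝ) ≤ u + ((j : ℝ) + 1) + 1 := by
    have : 1 - u ≤ (j : ℝ) + 1 := le_trans ((le_max_right _ _).trans hN) hiN
    linarith
  have hb : (0 : ℝ) < u + ((j : ℝ) + 1) + 1 := by linarith
  have hG1 : 0 < Real.Gamma ((j : ℝ) + 1 + 1) := Real.Gamma_pos_of_pos (by positivity)
  have hG2 : 0 < Real.Gamma (u + ((j : ℝ) + 1) + 1) := Real.Gamma_pos_of_pos hb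
  push_cast
  have e1 : Real.Gamma ((j : ℝ) + 1 + 1 + 1) = ((j : ℝ) + 1 + 1) * Real.Gamma ((j : ℝ) + 1 + 1) :=
    Real.Gamma_add_one (by positivity)
  have e2 : Real.Gamma (u + ((j : ℝ) + 1 + 1) + 1)
      = (u + ((j : ℝ) + 1) + 1) * Real.Gamma (u + ((j : ℝ) + 1) + 1) := by
    rw [show u + ((j : ℝ) + 1 + 1) + 1 = (u + ((j : ℝ) + 1) + 1) + 1 by ring,
      Real.Gamma_add_one (by linarith)]
  simp only [Nat.add_sub_cancel, Real.norm_eq_abs]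
  rw [e1, e2]
  rw [abs_inv, abs_inv, abs_of_pos (mul_pos hG1 hG2),
    abs_of_pos (mul_pos (mul_pos (by positivity) hG1) (mul_pos hb hG2)),
    abs_of_nonneg (by positivity), abs_of_nonneg (by positivity)]
  set G1 := Real.Gamma ((j : ℝ) + 1 + 1)
  set G2 := Real.Gamma (u + ((j : ℝ) + 1) + 1)
  rw [pow_succ]
  have key : 2 * R ≤ ((j : ℝ) + 1) * (u + ((j : ℝ) + 1) + 1) := by nlinarith
  have hint := mul_le_mul_of_nonneg_left key
    (by positivity : (0:ℝ) ≤ (((j : ℝ) + 1 + 1) * R ^ j * (G1 * G2))⁻¹ * (R ^ j * (G1*G2)))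
  rw [← div_eq_mul_inv, ← div_eq_mul_inv, ← mul_div_assoc]
  rw [div_le_div_iff₀ (by positivity) (by positivity)]
  nlinarith [pow_pos hR j, mul_pos hG1 hG2, mul_le_mul_of_nonneg_left key
    (by positivity : (0:ℝ) ≤ R ^ j * (G1 * G2))]

set_option maxHeartbeats 1000000 in
lemma besselS_main (u x : ℝ) :
    HasDerivAt (fun y => besselS u y)
      (∑' i : ℕ, (i : ℝ) * x ^ (i - 1) / (Real.Gamma (i + 1) * Real.Gamma (u + i + 1))) x ∧
    Summable (fun i : ℕ => x ^ i / (Real.Gamma (i + 1) * Real.Gamma (u + i + 1))) ∧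
    Summable (fun i : ℕ => (i : ℝ) * x ^ (i - 1) / (Real.Gamma (i + 1) * Real.Gamma (u + i + 1))) := by
  set R : ℝ := |x| + 1 with hRdef
  have hR : 0 < R := by positivity
  have hxmem : x ∈ ball (0 : ℝ) R := by
    simp [Real.dist_eq]
    linarith [abs_nonneg x]
  have h0mem : (0 : ℝ) ∈ ball (0 : ℝ) R := mem_ball_self hR
  set g : ℕ → ℝ → ℝ := fun i y => y ^ i / (Real.Gamma (i + 1) * Real.Gamma (u + i + 1)) with hg
  set g' : ℕ → ℝ → ℝ :=
    fun i y => (i : ℝ) * y ^ (i - 1) / (Real.Gamma (i + 1) * Real.Gamma (u + i + 1)) with hg'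
  have hder : ∀ i y, y ∈ ball (0 : ℝ) R → HasDerivAt (g i) (g' i y) y :=
    fun i y _ => (hasDerivAt_pow i y).div_const _
  have hbound : ∀ i y, y ∈ ball (0 : ℝ) R →
      ‖g' i y‖ ≤ (i : ℝ) * R ^ (i - 1) * |(Real.Gamma (i + 1) * Real.Gamma (u + i + 1))⁻¹| := by
    intro i y hy
    have hyR : |y| ≤ R := by
      simp [Real.dist_eq] at hy; linarith
    simp only [Real.norm_eq_abs, g']
    rw [div_eq_mul_inv, abs_mul, abs_mul, abs_pow, abs_of_nonneg (by positivity : (0:ℝ) ≤ (i:ℝ))]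
    gcongr
  have hg0 : Summable (fun i => g i 0) := by
    apply summable_of_ne_finset_zero (s := {0})
    intro i hi
    simp only [g]
    rw [zero_pow (by simpa using hi), zero_div]
  refine ⟨?_, ?_, ?_⟩
  · exact hasDerivAt_tsum_of_isPreconnected (summable_U u R hR) isOpen_ball
      (convex_ball (0:ℝ) R).isPreconnected hder hbound h0mem hg0 hxmem
  · exact summable_of_summable_hasDerivAt_of_isPreconnected (summable_U u R hR) isOpen_ball
      (convex_ball (0:ℝ) R).isPreconnected hder hbound h0mem hg0 hxmem
  · exact Summable.of_norm_bounded (summable_U u R hR) (fun i => hbound i x hxmem)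

lemma gamma_step (u : ℝ) (i : ℕ) (t : ℝ) :
    (u + i) * (t / (Real.Gamma (i + 1) * Real.Gamma (u + i + 1)))
      = t / (Real.Gamma (i + 1) * Real.Gamma (u + i)) := by
  by_cases h : (u + (i : ℝ)) = 0
  · rw [h, zero_mul, Real.Gamma_zero, mul_zero, div_zero]
  · rw [Real.Gamma_add_one h]
    by_cases hG : Real.Gamma (u + i) = 0
    · rw [hG]; simp
    · have hG1 : Real.Gamma ((i : ℝ) + 1) ≠ 0 :=
        ne_of_gt (Real.Gamma_pos_of_pos (by positivity))
      field_simp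
lemma besselF_hasDerivAt (u x : ℝ) (hx : 0 < x) :
    HasDerivAt (fun y => besselF u y) (besselF (u - 1) x) x := by
  obtain ⟨hS, hsum, hsum'⟩ := besselS_main u x
  have h1 : HasDerivAt (fun y : ℝ => y ^ u) (u * x ^ (u - 1)) x :=
    Real.hasDerivAt_rpow_const (Or.inl hx.ne')
  have h2 := h1.mul hS
  have hval : u * x ^ (u - 1) * besselS u x
      + x ^ u * ∑' i : ℕ, (i : ℝ) * x ^ (i - 1) / (Real.Gamma (i + 1) * Real.Gamma (u + i + 1))
      = besselF (u - 1) x := by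
    have hxu : x ^ u = x ^ (u - 1) * x := by
      rw [← Real.rpow_add_one hx.ne']; ring_nf
    rw [hxu]
    have hxD : x * ∑' i : ℕ, (i : ℝ) * x ^ (i - 1) / (Real.Gamma (i + 1) * Real.Gamma (u + i + 1))
        = ∑' i : ℕ, (i : ℝ) * x ^ i / (Real.Gamma (i + 1) * Real.Gamma (u + i + 1)) := by
      rw [← tsum_mul_left]
      refine tsum_congr fun i => ?_
      cases i with
      | zero => simp
      | succ j => rw [Nat.add_sub_cancel]; push_cast; ring
    have hsum2 : Summable (fun i : ℕ =>
        (i : ℝ) * x ^ i / (Real.Gamma (i + 1) * Real.Gamma (u + i + 1))) := by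
      refine (hsum'.mul_left x).congr fun i => ?_
      cases i with
      | zero => simp
      | succ j => rw [Nat.add_sub_cancel]; push_cast; ring
    calc u * x ^ (u - 1) * besselS u x + x ^ (u - 1) * x
          * ∑' i : ℕ, (i : ℝ) * x ^ (i - 1) / (Real.Gamma (i + 1) * Real.Gamma (u + i + 1))
        = x ^ (u - 1) * (u * besselS u x
          + x * ∑' i : ℕ, (i : ℝ) * x ^ (i - 1) / (Real.Gamma (i + 1) * Real.Gamma (u + i + 1))) := by
          ring
      _ = x ^ (u - 1) * ((∑' i : ℕ, u * (x ^ i / (Real.Gamma (i + 1) * Real.Gamma (u + i + 1))))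
          + ∑' i : ℕ, (i : ℝ) * x ^ i / (Real.Gamma (i + 1) * Real.Gamma (u + i + 1))) := by
          rw [hxD, besselS, tsum_mul_left]
      _ = x ^ (u - 1) * ∑' i : ℕ, (u * (x ^ i / (Real.Gamma (i + 1) * Real.Gamma (u + i + 1)))
          + (i : ℝ) * x ^ i / (Real.Gamma (i + 1) * Real.Gamma (u + i + 1))) := by
          rw [Summable.tsum_add (hsum.mul_left u) hsum2]
      _ = besselF (u - 1) x := by
          rw [besselF, besselS]
          congr 1
          refine tsum_congr fun i => ?_
          rw [show u - 1 + (i : ℝ) + 1 = u + i by ring, ← gamma_step u i (x ^ i)]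
          ring
  rw [hval] at h2
  exact h2

lemma wBessel_eq (v c x : ℝ) (hx : 0 < x) :
    wBessel v c x = Real.exp (-c * x) * besselF v x := by
  rw [wBessel, besselI, besselF, besselS]
  have h1 : 2 * Real.sqrt x / 2 = Real.sqrt x := by ring
  have h2 : (2 * Real.sqrt x) ^ 2 / 4 = x := by
    rw [mul_pow, Real.sq_sqrt hx.le]; ring
  rw [h1, h2]
  have h3 : Real.sqrt x ^ v = x ^ (v / 2) := by
    rw [Real.sqrt_eq_rpow, ← Real.rpow_mul hx.le]
    ring_nf
  have h4 : x ^ (v / 2) * x ^ (v / 2) = x ^ v := by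
    rw [← Real.rpow_add hx]; ring_nf
  rw [h3]
  calc x ^ (v / 2) * Real.exp (-c * x) * (x ^ (v / 2)
        * ∑' i : ℕ, x ^ i / (Real.Gamma (i + 1) * Real.Gamma (v + i + 1)))
      = (x ^ (v / 2) * x ^ (v / 2)) * Real.exp (-c * x)
        * ∑' i : ℕ, x ^ i / (Real.Gamma (i + 1) * Real.Gamma (v + i + 1)) := by ring
    _ = Real.exp (-c * x) * (x ^ v
        * ∑' i : ℕ, x ^ i / (Real.Gamma (i + 1) * Real.Gamma (v + i + 1))) := by rw [h4]; ring

lemma pascal0 (z : ℝ) (b : ℕ → ℝ) (n : ℕ) :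
    ∑ k ∈ Finset.range (n + 2), ((n + 1).choose k : ℝ) * z ^ k * b k
      = ∑ k ∈ Finset.range (n + 1), (n.choose k : ℝ) * z ^ k * b k
        + ∑ k ∈ Finset.range (n + 1), (n.choose k : ℝ) * z ^ (k + 1) * b (k + 1) := by
  rw [Finset.sum_range_succ' (fun k => ((n + 1).choose k : ℝ) * z ^ k * b k) (n + 1)]
  have h1 : ∀ k ∈ Finset.range (n + 1), ((n + 1).choose (k + 1) : ℝ) * z ^ (k + 1) * b (k + 1)
      = (n.choose k : ℝ) * z ^ (k + 1) * b (k + 1)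
        + (n.choose (k + 1) : ℝ) * z ^ (k + 1) * b (k + 1) := by
    intro k _
    rw [Nat.choose_succ_succ]; push_cast; ring
  rw [Finset.sum_congr rfl h1, Finset.sum_add_distrib]
  have h2 : ∑ k ∈ Finset.range (n + 1), (n.choose (k + 1) : ℝ) * z ^ (k + 1) * b (k + 1)
        + ((n + 1).choose 0 : ℝ) * z ^ 0 * b 0
      = ∑ k ∈ Finset.range (n + 1), (n.choose k : ℝ) * z ^ k * b k := by
    have h3 := Finset.sum_range_succ' (fun k => (n.choose k : ℝ) * z ^ k * b k) (n + 1)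
    rw [Finset.sum_range_succ (fun k => (n.choose k : ℝ) * z ^ k * b k) (n + 1)] at h3
    simp only [Nat.choose_succ_self, Nat.cast_zero, zero_mul, add_zero] at h3
    simp only [Nat.choose_zero_right, Nat.cast_one, pow_zero, one_mul] at h3 ⊢
    linarith [h3]
  linarith [h2]

lemma pascal (a : ℝ) (ha : a ≠ 0) (b : ℕ → ℝ) (n : ℕ) :
    ∑ k ∈ Finset.range (n + 2), ((n + 1).choose k : ℝ) * a ^ (n + 1 - k) * b k
      = a * ∑ k ∈ Finset.range (n + 1), (n.choose k : ℝ) * a ^ (n - k) * b k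
        + ∑ k ∈ Finset.range (n + 1), (n.choose k : ℝ) * a ^ (n - k) * b (k + 1) := by
  have conv : ∀ (m : ℕ) (C : ℝ) (k : ℕ), k ≤ m → C * a ^ (m - k) * b k
      = a ^ m * (C * (a⁻¹) ^ k * b k) := by
    intro m C k hk
    rw [pow_sub₀ a ha hk, inv_pow]
    ring
  have conv' : ∀ (m : ℕ) (C : ℝ) (k : ℕ), k ≤ m → C * a ^ (m - k) * b (k + 1)
      = a ^ m * (C * (a⁻¹) ^ k * b (k + 1)) := by
    intro m C k hk
    rw [pow_sub₀ a ha hk, inv_pow]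
    ring
  rw [Finset.sum_congr rfl (fun k hk => conv (n + 1) _ k (by
        simpa using Nat.lt_succ_iff.mp (Finset.mem_range.mp hk))),
    Finset.sum_congr rfl (fun k hk => conv n _ k (Nat.lt_succ_iff.mp (Finset.mem_range.mp hk))),
    Finset.sum_congr rfl (fun k hk => conv' n _ k (Nat.lt_succ_iff.mp (Finset.mem_range.mp hk))),
    ← Finset.mul_sum, ← Finset.mul_sum, ← Finset.mul_sum]
  rw [pascal0 a⁻¹ b n]
  have hz : ∀ k, (n.choose k : ℝ) * (a⁻¹) ^ (k + 1) * b (k + 1)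
      = a⁻¹ * ((n.choose k : ℝ) * (a⁻¹) ^ k * b (k + 1)) := by
    intro k; ring
  rw [Finset.sum_congr rfl (fun k _ => hz k), ← Finset.mul_sum]
  rw [mul_add, pow_succ]
  field_simp

noncomputable def PP (n : ℕ) (v c x : ℝ) : ℝ :=
  Real.exp (-c * x) * ∑ k ∈ Finset.range (n + 1),
    (n.choose k : ℝ) * (-c) ^ (n - k) * besselF (v - k) x

lemma PP_hasDerivAt (n : ℕ) (v c x : ℝ) (hc : 0 < c) (hx : 0 < x) :
    HasDerivAt (fun y => PP n v c y) (PP (n + 1) v c x) x := by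
  have hexp : HasDerivAt (fun y : ℝ => Real.exp (-c * y)) (Real.exp (-c * x) * (-c)) x := by
    simpa using ((hasDerivAt_id x).const_mul (-c)).exp
  have hsum : HasDerivAt (fun y => ∑ k ∈ Finset.range (n + 1),
      (n.choose k : ℝ) * (-c) ^ (n - k) * besselF (v - k) y)
      (∑ k ∈ Finset.range (n + 1),
      (n.choose k : ℝ) * (-c) ^ (n - k) * besselF (v - k - 1) x) x :=
    HasDerivAt.fun_sum fun k _ => (besselF_hasDerivAt (v - k) x hx).const_mul _
  have h2 := hexp.mul hsum
  have hval : Real.exp (-c * x) * (-c) * (∑ k ∈ Finset.range (n + 1),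
        (n.choose k : ℝ) * (-c) ^ (n - k) * besselF (v - k) x)
      + Real.exp (-c * x) * ∑ k ∈ Finset.range (n + 1),
        (n.choose k : ℝ) * (-c) ^ (n - k) * besselF (v - k - 1) x
      = PP (n + 1) v c x := by
    rw [PP, pascal (-c) (by linarith : (-c : ℝ) ≠ 0) (fun k => besselF (v - k) x) n]
    have harg : ∀ k : ℕ, besselF (v - ((k : ℕ) + 1 : ℕ)) x = besselF (v - k - 1) x := by
      intro k
      norm_num
      ring_nf
    simp only [harg]
    ring
  rw [hval] at h2
  exact h2

lemma ML (n : ℕ) (v c : ℝ) (hc : 0 < c) :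
    ∀ x : ℝ, 0 < x → iteratedDeriv n (fun y => wBessel v c y) x = PP n v c x := by
  induction n with
  | zero =>
    intro x hx
    rw [iteratedDeriv_zero, wBessel_eq v c x hx, PP]
    simp
  | succ n ih =>
    intro x hx
    rw [iteratedDeriv_succ]
    have heq : deriv (iteratedDeriv n fun y => wBessel v c y) x
        = deriv (fun y => PP n v c y) x := by
      apply Filter.EventuallyEq.deriv_eq
      filter_upwards [isOpen_Ioi.mem_nhds (show x ∈ Set.Ioi 0 from hx)] with y hy
      exact ih y hy
    rw [heq, (PP_hasDerivAt n v c x hc hx).deriv]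

theorem Qt_parameter_shift (n : ℕ) (α c x : ℝ) (hα : -1 < α) (hc : 0 < c) (hx : 0 < x) :
    Qt n (α + 1) c x = (1 / c) * Qt n α c x - (1 / c) * Qt (n + 1) α c x := by
  rw [Qt, Qt, Qt, ML n (α + 1 + n) c hc x hx, ML n (α + n) c hc x hx,
    ML (n + 1) (α + (n + 1 : ℕ)) c hc x hx]
  have hv : α + ((n + 1 : ℕ) : ℝ) = α + 1 + n := by push_cast; ring
  rw [hv, PP, PP, PP]
  rw [pascal (-c) (by linarith : (-c : ℝ) ≠ 0) (fun k => besselF (α + 1 + n - k) x) n]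
  have harg : ∀ k : ℕ, besselF (α + 1 + (n : ℝ) - ((k : ℕ) + 1 : ℕ)) x
      = besselF (α + (n : ℝ) - k) x := by
    intro k; norm_num; ring_nf
  simp only [harg]
  field_simp
  ring
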